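/- Let n ≥ 2 and 2 ≤ t ≤ n be integers and let H_t(C_n) be the t-path hypergraph of the cycle C_n on vertices x_1,…,x_n, whose hyperedges are the vertex sets {x_i, x_{i+1}, …, x_{i+t-1}} (indices modulo n) of paths on t consecutive vertices of C_n. Then H_t(C_n) is a t-partite hypergraph if and only if n ≡ 0 (mod t). -/
import Mathlib


/-- The hyperedge of the `t`-path hypergraph of the cycle `C_n` starting at vertex `i`:
the set `{i, i+1, …, i+t-1}` of `t` consecutive vertices (indices modulo `n`). -/
def cyclePathEdge (n t : ℕ) (i : ZMod n) : Finset (ZMod n) :=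
  (Finset.range t).image (fun j : ℕ => (i + (j : ZMod n)))

/-- Existence and uniqueness of the shift `j' < t` with `(a + j') % t = j`. -/
lemma cyclePath_unique_shift (t a j : ℕ) (ht : 0 < t) (hj : j < t) :
    ∃! j', j' < t ∧ (a + j') % t = j := by
  have hcomp : (a + (j + t - a % t) % t) % t = j := by
    have h1 : (a + (j + t - a % t) % t) % t = (a + (j + t - a % t)) % t :=
      Nat.add_mod_mod a _ t
    have h2 : (a + (j + t - a % t)) % t = (a % t + (j + t - a % t)) % t :=
      ((Nat.mod_modEq a t).add_right _).symm
    have h3 : a % t + (j + t - a % t) = j + t := by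
      have := Nat.mod_lt a ht
      omega
    rw [h1, h2, h3, Nat.add_mod_right, Nat.mod_eq_of_lt hj]
  refine ⟨(j + t - a % t) % t, ⟨Nat.mod_lt _ ht, hcomp⟩, ?_⟩
  rintro y ⟨hy, hmod⟩
  have hx : (j + t - a % t) % t < t := Nat.mod_lt _ ht
  have : (a + y) % t = (a + (j + t - a % t) % t) % t := by rw [hmod, hcomp]
  have hcancel : y % t = ((j + t - a % t) % t) % t :=
    (Nat.ModEq.add_left_cancel' a this)
  rwa [Nat.mod_eq_of_lt hy, Nat.mod_eq_of_lt hx] at hcancel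

/-- For `n ≥ 2` and `2 ≤ t ≤ n`, the `t`-path hypergraph `H_t(C_n)` of the
cycle `C_n` (whose hyperedges are the sets `{x_i, …, x_{i+t-1}}`, indices mod `n`) is
`t`-partite if and only if `n ≡ 0 (mod t)`. -/
theorem cyclePathHypergraph_tPartite_iff (n t : ℕ) (hn : 2 ≤ n) (ht2 : 2 ≤ t) (htn : t ≤ n) :
    (∃ X : Fin t → Finset (ZMod n),
      (∀ i j : Fin t, i ≠ j → Disjoint (X i) (X j)) ∧
      (∀ v : ZMod n, ∃ i : Fin t, v ∈ X i) ∧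
      (∀ i : ZMod n, ∀ j : Fin t, (cyclePathEdge n t i ∩ X j).card = 1)) ↔
    n % t = 0 := by
  have hnz : NeZero n := ⟨by omega⟩
  have htz : NeZero t := ⟨by omega⟩
  have ht0 : 0 < t := by omega
  have hmem : ∀ (i v : ZMod n), v ∈ cyclePathEdge n t i ↔ ∃ k, k < t ∧ i + (k : ZMod n) = v := by
    intro i v
    simp [cyclePathEdge]
  -- distinct small naturals give distinct elements of ZMod n
  have hcast_ne : ∀ k : ℕ, 0 < k → k < n → ((k : ZMod n) ≠ 0) := by
    intro k hk1 hk2 h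
    have := congrArg ZMod.val h
    rw [ZMod.val_natCast, Nat.mod_eq_of_lt hk2] at this
    simp at this
    omega
  constructor
  · rintro ⟨X, hdisj, hcov, hcard⟩
    -- uniqueness of the class of a vertex
    have huniq : ∀ (v : ZMod n) (j j' : Fin t), v ∈ X j → v ∈ X j' → j = j' := by
      intro v j j' hj hj'
      by_contra hne
      exact (Finset.disjoint_left.mp (hdisj j j' hne) hj) hj'
    -- step: class is invariant under adding t
    have hstep : ∀ (v : ZMod n) (j : Fin t), v ∈ X j → v + (t : ZMod n) ∈ X j := by
      intro v j hv
      obtain ⟨u, hu⟩ := Finset.card_eq_one.mp (hcard (v + 1) j)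
      have humem : u ∈ cyclePathEdge n t (v + 1) ∩ X j := hu ▸ Finset.mem_singleton_self u
      obtain ⟨huE, huX⟩ := Finset.mem_inter.mp humem
      obtain ⟨k, hk, hku⟩ := (hmem _ _).mp huE
      rcases eq_or_lt_of_le (Nat.lt_iff_add_one_le.mp hk) with hkt | hkt
      · -- k = t - 1, so u = v + t
        have : u = v + (t : ZMod n) := by
          rw [← hku, ← hkt]
          push_cast
          ring
        rwa [← this]
      · -- k + 1 < t : u ∈ E_v ∩ X j, and v ∈ E_v ∩ X j, so u = v, contradiction
        exfalso
        have huEv : u ∈ cyclePathEdge n t v := by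
          rw [hmem]
          exact ⟨k + 1, hkt, by rw [← hku]; push_cast; ring⟩
        have hvEv : v ∈ cyclePathEdge n t v := by
          rw [hmem]
          exact ⟨0, ht0, by simp⟩
        have h1 := Finset.card_le_one.mp (le_of_eq (hcard v j))
        have heq : u = v := h1 u (Finset.mem_inter.mpr ⟨huEv, huX⟩)
          v (Finset.mem_inter.mpr ⟨hvEv, hv⟩)
        have h2 : v + ((k + 1 : ℕ) : ZMod n) = v + 0 := by
          push_cast
          rw [add_zero]
          have hr : v + ((k : ZMod n) + 1) = v + 1 + (k : ZMod n) := by ring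
          rw [hr, hku, heq]
        have := add_left_cancel h2
        exact hcast_ne (k + 1) (by omega) (by omega) this
    -- iterate the step
    have hiter : ∀ (k : ℕ) (v : ZMod n) (j : Fin t), v ∈ X j →
        v + ((k * t : ℕ) : ZMod n) ∈ X j := by
      intro k
      induction k with
      | zero => intro v j hv; simpa using hv
      | succ k ih =>
        intro v j hv
        have := hstep _ _ (ih v j hv)
        have hcast : v + (((k + 1) * t : ℕ) : ZMod n)
            = v + ((k * t : ℕ) : ZMod n) + (t : ZMod n) := by
          push_cast
          ring
        rwa [hcast]
    -- conclude
    by_contra hd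
    set d := n % t with hdd
    have hd1 : 0 < d := Nat.pos_of_ne_zero hd
    have hd2 : d < t := Nat.mod_lt n ht0
    obtain ⟨j, hj⟩ := hcov ((d : ℕ) : ZMod n)
    have h0X : (0 : ZMod n) ∈ X j := by
      have h := hiter (n / t) _ j hj
      have : ((d : ℕ) : ZMod n) + ((n / t * t : ℕ) : ZMod n) = 0 := by
        rw [← Nat.cast_add, Nat.mod_add_div' n t, ZMod.natCast_self]
      rwa [this] at h
    have h0E : (0 : ZMod n) ∈ cyclePathEdge n t 0 := by
      rw [hmem]; exact ⟨0, ht0, by simp⟩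
    have hdE : ((d : ℕ) : ZMod n) ∈ cyclePathEdge n t 0 := by
      rw [hmem]; exact ⟨d, hd2, by simp⟩
    have h1 := Finset.card_le_one.mp (le_of_eq (hcard 0 j))
    have : ((d : ℕ) : ZMod n) = 0 := h1 _ (Finset.mem_inter.mpr ⟨hdE, hj⟩)
      _ (Finset.mem_inter.mpr ⟨h0E, h0X⟩)
    exact hcast_ne d hd1 (by omega) this
  · intro hmod
    have hdvd : t ∣ n := Nat.dvd_of_mod_eq_zero hmod
    refine ⟨fun j => Finset.univ.filter (fun v => v.val % t = j.val), ?_, ?_, ?_⟩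
    · intro i j hij
      rw [Finset.disjoint_left]
      intro v hv hv'
      simp only [Finset.mem_filter, Finset.mem_univ, true_and] at hv hv'
      exact hij (Fin.ext (hv.symm.trans hv'))
    · intro v
      exact ⟨⟨v.val % t, Nat.mod_lt _ ht0⟩, by simp⟩
    · intro i j
      -- key residue computation
      have hval : ∀ k : ℕ, k < t → (i + (k : ZMod n)).val % t = (i.val + k) % t := by
        intro k hk
        rw [ZMod.val_add, ZMod.val_natCast, Nat.mod_eq_of_lt (lt_of_lt_of_le hk htn),
          Nat.mod_mod_of_dvd _ hdvd]
      -- the intersection as an image of a filtered range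
      have hinter : cyclePathEdge n t i ∩ Finset.univ.filter (fun v => v.val % t = j.val)
          = ((Finset.range t).filter (fun k => (i.val + k) % t = j.val)).image
              (fun k : ℕ => i + (k : ZMod n)) := by
        ext v
        simp only [Finset.mem_inter, Finset.mem_filter, Finset.mem_univ, true_and,
          Finset.mem_image, Finset.mem_range, cyclePathEdge]
        constructor
        · rintro ⟨⟨k, hk, rfl⟩, hres⟩
          exact ⟨k, ⟨hk, by rw [← hval k hk]; exact hres⟩, rfl⟩
        · rintro ⟨k, ⟨hk, hres⟩, rfl⟩
          exact ⟨⟨k, hk, rfl⟩, by rw [hval k hk]; exact hres⟩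
      rw [hinter]
      rw [Finset.card_image_of_injOn]
      · -- the filtered range is a singleton
        obtain ⟨k₀, ⟨hk₀t, hk₀m⟩, hk₀u⟩ :=
          cyclePath_unique_shift t i.val j.val ht0 j.isLt
        rw [Finset.card_eq_one]
        refine ⟨k₀, ?_⟩
        ext k
        simp only [Finset.mem_filter, Finset.mem_range, Finset.mem_singleton]
        constructor
        · rintro ⟨hk, hres⟩
          exact hk₀u k ⟨hk, hres⟩
        · rintro rfl
          exact ⟨hk₀t, hk₀m⟩
      · -- injectivity on range t
        intro a ha b hb hab
        simp only [Finset.coe_filter, Set.mem_setOf_eq, Finset.mem_range] at ha hb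
        have := add_left_cancel hab
        have := congrArg ZMod.val this
        rw [ZMod.val_natCast, ZMod.val_natCast, Nat.mod_eq_of_lt (by omega),
          Nat.mod_eq_of_lt (by omega)] at this
        exact this
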